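/- Let u¹, u² : ℝ → ℝ be smooth with u²(x) ≠ 0 for all x. Define differential operators on pairs ξ = (ξ₁, ξ₂) of smooth functions by 𝒫₁;₀(ξ) = ( −(u²ξ₁)′ − u²ξ₁′ − (u²ξ₂)′, −u²ξ₁′ ), K(ξ) = (−ξ₁ + ξ₂, ξ₂/u²), and Kᵀ(ξ) = (−ξ₁, ξ₁ + ξ₂/u²). Then for every pair ξ, (K ∘ 𝒫₁;₀ ∘ Kᵀ)(ξ) = (ξ₂′, ξ₁′). That is, under the change of variables v¹ = u² − u¹, v² = log u², the dispersionless limit 𝒫₁;₀ of the first Hamiltonian operator of the Ablowitz–Ladik hierarchy becomes the constant operator [[0, ∂ₓ],[∂ₓ, 0]] associated with the flat metric η = [[0,1],[1,0]] of the generalized Frobenius manifold with potential F = ½(v¹)²v² + v¹e^{v²} + ½(v¹)²log v¹. -/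

import Mathlib

/-- The dispersionless limit of the first Hamiltonian operator of the Ablowitz–Ladik
hierarchy, `𝒫₁;₀(ξ) = ( −(u²ξ₁)′ − u²ξ₁′ − (u²ξ₂)′, −u²ξ₁′ )`. -/
noncomputable def P10 (u2 : ℝ → ℝ) (ξ : (ℝ → ℝ) × (ℝ → ℝ)) : (ℝ → ℝ) × (ℝ → ℝ) :=
  (fun x => -deriv (fun y => u2 y * ξ.1 y) x - u2 x * deriv ξ.1 x
      - deriv (fun y => u2 y * ξ.2 y) x,
   fun x => -u2 x * deriv ξ.1 x)

/-- The Jacobian `K(ξ) = (−ξ₁ + ξ₂, ξ₂/u²)` of the change of variables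
`v¹ = u² − u¹`, `v² = log u²`. -/
noncomputable def Kop (u2 : ℝ → ℝ) (ξ : (ℝ → ℝ) × (ℝ → ℝ)) : (ℝ → ℝ) × (ℝ → ℝ) :=
  (fun x => -ξ.1 x + ξ.2 x, fun x => ξ.2 x / u2 x)

/-- The transpose Jacobian `Kᵀ(ξ) = (−ξ₁, ξ₁ + ξ₂/u²)`. -/
noncomputable def KopT (u2 : ℝ → ℝ) (ξ : (ℝ → ℝ) × (ℝ → ℝ)) : (ℝ → ℝ) × (ℝ → ℝ) :=
  (fun x => -ξ.1 x, fun x => ξ.1 x + ξ.2 x / u2 x)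

/-- Under the change of variables `v¹ = u² − u¹`, `v² = log u²`, the
dispersionless limit `𝒫₁;₀` of the first Hamiltonian operator of the Ablowitz–Ladik
hierarchy becomes the constant operator `[[0, ∂ₓ],[∂ₓ, 0]]` associated with the flat
metric `η = [[0,1],[1,0]]` of the generalized Frobenius manifold with potential
`F = ½(v¹)²v² + v¹e^{v²} + ½(v¹)² log v¹`: for every pair `ξ` of smooth functions,
`(K ∘ 𝒫₁;₀ ∘ Kᵀ)(ξ) = (ξ₂′, ξ₁′)`. -/
theorem dispersionless_P1_constant_form
    (u1 u2 : ℝ → ℝ) (hu1 : ContDiff ℝ (⊤ : ℕ∞) u1) (hu2 : ContDiff ℝ (⊤ : ℕ∞) u2)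
    (hu2ne : ∀ x : ℝ, u2 x ≠ 0)
    (ξ1 ξ2 : ℝ → ℝ) (hξ1 : ContDiff ℝ (⊤ : ℕ∞) ξ1) (hξ2 : ContDiff ℝ (⊤ : ℕ∞) ξ2) :
    (Kop u2 ∘ P10 u2 ∘ KopT u2) (ξ1, ξ2) = (deriv ξ2, deriv ξ1) := by
  have hdu2 : Differentiable ℝ u2 := hu2.differentiable (by simp)
  have hdξ1 : Differentiable ℝ ξ1 := hξ1.differentiable (by simp)
  have hdξ2 : Differentiable ℝ ξ2 := hξ2.differentiable (by simp)
  have h1 : (fun y => u2 y * (-ξ1 y)) = fun y => -(u2 y * ξ1 y) := by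
    funext y; ring
  have h2 : (fun y => u2 y * (ξ1 y + ξ2 y / u2 y)) = fun y => u2 y * ξ1 y + ξ2 y := by
    funext y; rw [mul_add, mul_div_cancel₀ _ (hu2ne y)]
  have hD1 : ∀ x, deriv (fun y => -(u2 y * ξ1 y)) x
      = -(deriv u2 x * ξ1 x + u2 x * deriv ξ1 x) := by
    intro x
    rw [deriv.fun_neg, deriv_fun_mul (hdu2 x) (hdξ1 x)]
  have hD2 : ∀ x, deriv (fun y => u2 y * ξ1 y + ξ2 y) x
      = deriv u2 x * ξ1 x + u2 x * deriv ξ1 x + deriv ξ2 x := by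
    intro x
    rw [deriv_fun_add ((hdu2 x).fun_mul (hdξ1 x)) (hdξ2 x), deriv_fun_mul (hdu2 x) (hdξ1 x)]
  have hDneg : ∀ x, deriv (fun y => -ξ1 y) x = -deriv ξ1 x := by
    intro x; exact deriv.neg
  simp only [Kop, P10, KopT, Function.comp_apply]
  refine Prod.ext ?_ ?_ <;> funext x
  · simp only [h1, h2, hD1, hD2, hDneg]
    ring
  · simp only [h1, h2, hD1, hD2, hDneg]
    field_simp [hu2ne x]
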